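/- There exist locally finite positive Borel measures ω, σ on ℝ satisfying the classical two-weight A_2 condition sup_I ω(I)σ(I)/|I|² < ∞ but for which both one-tailed A_2 conditions fail: sup_I (ω(I)/|I|) P(I,σ) = ∞ and sup_I (σ(I)/|I|) P(I,ω) = ∞. -/

import Mathlib

open MeasureTheory ENNReal

/-- An interval in `ℝ` given by its center and (positive) half-length. -/
structure RInterval where
  c : ℝ
  r : ℝ
  hr : 0 < r

namespace RInterval

def set (I : RInterval) : Set ℝ := Set.Ico (I.c - I.r) (I.c + I.r)

noncomputable def len (I : RInterval) : ℝ := 2 * I.r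

end RInterval

/-- The one-dimensional Poisson integral `P(I,ω) = ∫ |I|/(|I|+dist(x,I))² dω(x)`. -/
noncomputable def poisson (I : RInterval) (ω : Measure ℝ) : ℝ≥0∞ :=
  ∫⁻ x, ENNReal.ofReal (I.len / (I.len + Metric.infDist x I.set) ^ 2) ∂ω

namespace Stmt6

open Set Metric Classical

/-! ### The basic construction -/

/-- Scales. -/
noncomputable def cc (k : ℕ) : ℝ := 2 ^ (4 ^ (k + 2))

/-- Number of atoms (minus one) in the `k`-th heavy cluster. -/
def nn (k : ℕ) : ℕ := 4 ^ k

/-- Heavy cluster based at `x`: atoms of mass `4^i` at `x + 2^i`, `i ≤ n`. -/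
noncomputable def clusterAt (x : ℝ) (n : ℕ) : Measure ℝ :=
  Measure.sum (fun i : ℕ => if i ≤ n then (4 : ℝ≥0∞) ^ i • Measure.dirac (x + 2 ^ i) else 0)

/-- Probe atoms of mass `2⁻ᵏ` at positions `p k`. -/
noncomputable def probesAt (p : ℕ → ℝ) : Measure ℝ :=
  Measure.sum (fun k : ℕ => (2 : ℝ≥0∞)⁻¹ ^ k • Measure.dirac (p k))

/-- Heavy clusters at positions `p k`. -/
noncomputable def heaviesAt (p : ℕ → ℝ) : Measure ℝ :=
  Measure.sum (fun k : ℕ => clusterAt (p k) (nn k))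

noncomputable def ωM : Measure ℝ := probesAt (fun k => -cc k) + heaviesAt cc
noncomputable def σM : Measure ℝ := probesAt cc + heaviesAt (fun k => -cc k)

/-! ### Numeric facts -/

lemma cc_pos (k : ℕ) : 0 < cc k := by unfold cc; positivity

lemma cc_ge (k : ℕ) : (65536 : ℝ) ≤ cc k := by
  have h : (2:ℝ) ^ (16:ℕ) ≤ 2 ^ (4 ^ (k + 2)) := by
    apply pow_le_pow_right₀ one_le_two
    calc (16:ℕ) = 4 ^ 2 := by norm_num
    _ ≤ 4 ^ (k+2) := Nat.pow_le_pow_right (by norm_num) (by omega)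
  calc (65536:ℝ) = 2 ^ (16:ℕ) := by norm_num
  _ ≤ _ := h

lemma cc_quad {j k : ℕ} (h : j < k) : 4 * cc j ≤ cc k := by
  have h1 : (4:ℝ) * cc j = 2 ^ (4 ^ (j + 2) + 2) := by
    rw [pow_add]; norm_num [cc]; ring
  rw [h1, cc]
  apply pow_le_pow_right₀ one_le_two
  have h2 : 4 ^ (j + 2) + 2 ≤ 4 ^ (j + 3) := by
    have : 4 ^ (j+3) = 4 * 4 ^ (j+2) := by rw [pow_succ]; ring
    have h3 : 1 ≤ 4 ^ (j+2) := Nat.one_le_pow _ _ (by norm_num)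
    omega
  have h4 : 4 ^ (j + 3) ≤ 4 ^ (k + 2) := Nat.pow_le_pow_right (by norm_num) (by omega)
  omega

lemma nn_small (k : ℕ) : (2:ℝ) ^ (nn k) * 2 ≤ cc k := by
  have h1 : (2:ℝ) ^ (nn k) * 2 = 2 ^ (nn k + 1) := by rw [pow_succ]
  rw [h1, cc]
  apply pow_le_pow_right₀ one_le_two
  have h2 : nn k + 1 ≤ 2 * 4 ^ k := by
    have : 1 ≤ 4 ^ k := Nat.one_le_pow _ _ (by norm_num)
    unfold nn; omega
  have h3 : 4 ^ (k+2) = 16 * 4 ^ k := by rw [pow_add]; ring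
  omega

lemma exp_ineq (k : ℕ) : 2 * nn k + k + 14 ≤ 4 ^ (k + 2) := by
  have h1 : k + 1 ≤ 4 ^ k := by
    have := Nat.lt_two_pow_self (n := k)
    have h2 : (2:ℕ) ^ k ≤ 4 ^ k := Nat.pow_le_pow_left (by norm_num) k
    omega
  have h3 : 4 ^ (k+2) = 16 * 4 ^ k := by rw [pow_add]; ring
  unfold nn
  nlinarith [h1, h3]

/-- helper: shift a power of two to the other side in `ℝ≥0∞`. -/
lemma le_shift {A B : ℝ≥0∞} (m : ℕ) (h : A * 2 ^ m ≤ B) : A ≤ B * 2⁻¹ ^ m := by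
  have h2 : (2:ℝ≥0∞) ^ m * 2⁻¹ ^ m = 1 := by
    rw [← mul_pow, ENNReal.mul_inv_cancel two_ne_zero ofNat_ne_top, one_pow]
  calc A = A * 2 ^ m * 2⁻¹ ^ m := by rw [mul_assoc, h2, mul_one]
  _ ≤ B * 2⁻¹ ^ m := mul_le_mul_left h _

lemma ofReal_cc (k : ℕ) : ENNReal.ofReal (cc k) = 2 ^ (4 ^ (k + 2)) := by
  rw [cc, ← ENNReal.ofReal_ofNat 2, ← ENNReal.ofReal_pow (by norm_num)]

/-- Mass of the `k`-th heavy cluster is much smaller than `cc k`. -/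
lemma mass_le (k : ℕ) : (2:ℝ≥0∞) * 4 ^ (nn k) ≤ ENNReal.ofReal (cc k) * 2⁻¹ ^ (13 + k) := by
  apply le_shift
  rw [ofReal_cc]
  have h4 : (4:ℝ≥0∞) = 2 ^ (2:ℕ) := by norm_num
  calc (2:ℝ≥0∞) * 4 ^ nn k * 2 ^ (13 + k) = 2 ^ (1 + 2 * nn k + (13 + k)) := by
        rw [h4, ← pow_mul, pow_add, pow_add]; ring
  _ ≤ 2 ^ (4 ^ (k+2)) := by
        apply pow_le_pow_right₀ (by norm_num)
        have := exp_ineq k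
        omega

lemma two_inv_pow_le_one (m : ℕ) : (2⁻¹ : ℝ≥0∞) ^ m ≤ 1 :=
  pow_le_one' (by simp [ENNReal.inv_le_one]) m

/-! ### Geometric series lemmas -/

lemma tsum_halfpow : ∑' k : ℕ, (2⁻¹ : ℝ≥0∞) ^ k = 2 := by
  rw [ENNReal.tsum_geometric]
  have : (1:ℝ≥0∞) - 2⁻¹ = 2⁻¹ := ENNReal.one_sub_inv_two
  rw [this, inv_inv]

lemma tsum_halfpow_shift (C : ℝ≥0∞) (m : ℕ) :
    ∑' k : ℕ, C * 2⁻¹ ^ (m + 1 + k) = C * 2⁻¹ ^ m := by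
  have h : ∀ k : ℕ, C * 2⁻¹ ^ (m + 1 + k) = (C * 2⁻¹ ^ (m+1)) * 2⁻¹ ^ k := by
    intro k; rw [pow_add, mul_assoc]
  simp_rw [h]
  have h2 : (2⁻¹:ℝ≥0∞) ^ (m+1) * 2 = 2⁻¹ ^ m := by
    rw [pow_succ, mul_assoc, ENNReal.inv_mul_cancel two_ne_zero ofNat_ne_top, mul_one]
  rw [ENNReal.tsum_mul_left, tsum_halfpow, mul_assoc, h2]

lemma sum_four_pow_le (n : ℕ) :
    (∑ i ∈ Finset.range (n+1), (4:ℝ≥0∞) ^ i) ≤ 2 * 4 ^ n := by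
  induction n with
  | zero => simp
  | succ n ih =>
    rw [Finset.sum_range_succ]
    have h1 : (4:ℝ≥0∞) ^ (n+1) = 4 * 4 ^ n := by rw [pow_succ]; ring
    have h2 : (2:ℝ≥0∞) * 4 ^ n + 4 * 4 ^ n = 6 * 4 ^ n := by ring
    calc (∑ i ∈ Finset.range (n+1), (4:ℝ≥0∞) ^ i) + 4 ^ (n+1)
        ≤ 2 * 4 ^ n + 4 * 4 ^ n := add_le_add ih (by rw [h1])
    _ = 6 * 4 ^ n := h2
    _ ≤ 8 * 4 ^ n := mul_le_mul_left (by norm_num) _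
    _ = 2 * 4 ^ (n+1) := by rw [h1]; ring

/-! ### Applying the measures to sets -/

lemma clusterAt_apply (x : ℝ) (n : ℕ) {s : Set ℝ} (hs : MeasurableSet s) :
    clusterAt x n s = ∑' i : ℕ, if i ≤ n ∧ x + 2 ^ i ∈ s then (4:ℝ≥0∞) ^ i else 0 := by
  rw [clusterAt, Measure.sum_apply _ hs]
  congr 1; funext i
  by_cases h : i ≤ n
  · rw [if_pos h, Measure.smul_apply, Measure.dirac_apply' _ hs, Set.indicator_apply,
      smul_eq_mul]
    by_cases hm : x + 2 ^ i ∈ s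
    · rw [if_pos hm, if_pos ⟨h, hm⟩, Pi.one_apply, mul_one]
    · rw [if_neg hm, if_neg (by tauto), mul_zero]
  · rw [if_neg h, if_neg (by tauto)]
    rfl

lemma probesAt_apply (p : ℕ → ℝ) {s : Set ℝ} (hs : MeasurableSet s) :
    probesAt p s = ∑' k : ℕ, if p k ∈ s then (2⁻¹:ℝ≥0∞) ^ k else 0 := by
  rw [probesAt, Measure.sum_apply _ hs]
  congr 1; funext k
  rw [Measure.smul_apply, Measure.dirac_apply' _ hs, Set.indicator_apply, smul_eq_mul]
  by_cases hm : p k ∈ s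
  · rw [if_pos hm, if_pos hm, Pi.one_apply, mul_one]
  · rw [if_neg hm, if_neg hm, mul_zero]

lemma heaviesAt_apply (p : ℕ → ℝ) {s : Set ℝ} (hs : MeasurableSet s) :
    heaviesAt p s = ∑' k : ℕ, clusterAt (p k) (nn k) s := by
  rw [heaviesAt, Measure.sum_apply _ hs]

/-- Extract an atom from a cluster with positive measure. -/
lemma clusterAt_pos (x : ℝ) (n : ℕ) {s : Set ℝ} (hs : MeasurableSet s)
    (h : clusterAt x n s ≠ 0) : ∃ i, i ≤ n ∧ x + 2 ^ i ∈ s := by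
  rw [clusterAt_apply x n hs, Ne, ENNReal.tsum_eq_zero] at h
  push_neg at h
  obtain ⟨i, hi⟩ := h
  by_cases hc : i ≤ n ∧ x + 2 ^ i ∈ s
  · exact ⟨i, hc⟩
  · rw [if_neg hc] at hi; exact absurd rfl hi

lemma probesAt_pos (p : ℕ → ℝ) {s : Set ℝ} (hs : MeasurableSet s)
    (h : probesAt p s ≠ 0) : ∃ k, p k ∈ s := by
  rw [probesAt_apply p hs, Ne, ENNReal.tsum_eq_zero] at h
  push_neg at h
  obtain ⟨k, hk⟩ := h
  by_cases hc : p k ∈ s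
  · exact ⟨k, hc⟩
  · rw [if_neg hc] at hk; exact absurd rfl hk

/-- Total mass of a cluster. -/
lemma clusterAt_total (x : ℝ) (n : ℕ) {s : Set ℝ} (hs : MeasurableSet s) :
    clusterAt x n s ≤ 2 * 4 ^ n := by
  rw [clusterAt_apply x n hs]
  have h1 : ∑' i : ℕ, (if i ≤ n ∧ x + 2 ^ i ∈ s then (4:ℝ≥0∞) ^ i else 0)
      = ∑ i ∈ Finset.range (n+1), (if i ≤ n ∧ x + 2 ^ i ∈ s then (4:ℝ≥0∞) ^ i else 0) := by
    apply tsum_eq_sum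
    intro i hi
    rw [Finset.mem_range] at hi
    rw [if_neg]
    rintro ⟨h2, _⟩; omega
  rw [h1]
  calc _ ≤ ∑ i ∈ Finset.range (n+1), (4:ℝ≥0∞) ^ i := by
        apply Finset.sum_le_sum
        intro i _
        split_ifs
        · exact le_rfl
        · exact zero_le
  _ ≤ 2 * 4 ^ n := sum_four_pow_le n

/-- Probes have total mass at most 2. -/
lemma probesAt_le_two (p : ℕ → ℝ) {s : Set ℝ} (hs : MeasurableSet s) :
    probesAt p s ≤ 2 := by
  rw [probesAt_apply p hs]
  calc ∑' k : ℕ, (if p k ∈ s then (2⁻¹:ℝ≥0∞) ^ k else 0) ≤ ∑' k : ℕ, (2⁻¹:ℝ≥0∞) ^ k := by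
        apply ENNReal.tsum_le_tsum
        intro k; split_ifs
        · exact le_rfl
        · exact zero_le
  _ = 2 := tsum_halfpow

/-- Sum of powers `4^i` over `i` with `2^i < Λ` is at most `2Λ²`. -/
lemma tsum_pow4_lt (L : ℝ) :
    (∑' i : ℕ, if (2:ℝ) ^ i < L then (4:ℝ≥0∞) ^ i else 0) ≤ 2 * ENNReal.ofReal (L ^ 2) := by
  by_cases hb : L ≤ 1
  · have hz : ∀ i : ℕ, (if (2:ℝ) ^ i < L then (4:ℝ≥0∞) ^ i else 0) = 0 := by
      intro i
      rw [if_neg]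
      have h2 : (1:ℝ) ≤ 2 ^ i := one_le_pow₀ one_le_two
      push_neg
      linarith
    rw [tsum_congr hz, tsum_zero]
    exact zero_le
  · push_neg at hb
    have hex : ∃ m : ℕ, L ≤ 2 ^ m := by
      obtain ⟨m, hm⟩ := pow_unbounded_of_one_lt L (one_lt_two (α := ℝ))
      exact ⟨m, hm.le⟩
    have hMle : L ≤ 2 ^ (Nat.find hex) := Nat.find_spec hex
    rcases hM : Nat.find hex with _ | M
    · rw [hM] at hMle; norm_num at hMle; linarith
    · rw [hM] at hMle
      have hlt : ¬ (L ≤ 2 ^ M) := Nat.find_min hex (by omega)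
      push_neg at hlt
      have h1 : (∑' i : ℕ, if (2:ℝ) ^ i < L then (4:ℝ≥0∞) ^ i else 0)
          = ∑ i ∈ Finset.range (M+1), (if (2:ℝ) ^ i < L then (4:ℝ≥0∞) ^ i else 0) := by
        apply tsum_eq_sum
        intro i hi
        rw [Finset.mem_range] at hi
        rw [if_neg]
        push_neg
        calc L ≤ 2 ^ (M+1) := hMle
        _ ≤ 2 ^ i := pow_le_pow_right₀ one_le_two (by omega)
      rw [h1]
      have h2 : ∑ i ∈ Finset.range (M+1), (if (2:ℝ) ^ i < L then (4:ℝ≥0∞) ^ i else 0)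
          ≤ 2 * 4 ^ M := by
        calc _ ≤ ∑ i ∈ Finset.range (M+1), (4:ℝ≥0∞) ^ i := by
              apply Finset.sum_le_sum
              intro i _
              split_ifs
              · exact le_rfl
              · exact zero_le
        _ ≤ 2 * 4 ^ M := sum_four_pow_le M
      refine h2.trans (mul_le_mul_right ?_ 2)
      have h3 : (4:ℝ≥0∞) ^ M = ENNReal.ofReal (((2:ℝ) ^ M) ^ 2) := by
        rw [← pow_mul, show (2:ℝ) ^ (M * 2) = 4 ^ M by rw [mul_comm, pow_mul]; norm_num,
          ← ENNReal.ofReal_ofNat 4, ← ENNReal.ofReal_pow (by norm_num)]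
      rw [h3]
      apply ENNReal.ofReal_le_ofReal
      have h4 : (0:ℝ) ≤ 2 ^ M := by positivity
      exact pow_le_pow_left₀ h4 hlt.le 2

/-- Key bound: a cluster based at `x ≥ a` gives mass at most `2 (b-a)²` to `[a,b)`. -/
lemma clusterAt_near {x a b : ℝ} (n : ℕ) (hax : a ≤ x) :
    clusterAt x n (Ico a b) ≤ 2 * ENNReal.ofReal ((b - a) ^ 2) := by
  rw [clusterAt_apply x n measurableSet_Ico]
  refine le_trans (ENNReal.tsum_le_tsum (fun i => ?_)) (tsum_pow4_lt (b - a))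
  split_ifs with h1 h2
  · exact le_rfl
  · exfalso
    obtain ⟨-, h3, h4⟩ := h1
    exact h2 (by linarith)
  · exact zero_le
  · exact le_rfl

/-! ### Global growth bounds -/

/-- Positive-side heavy measure grows at most linearly in the right endpoint. -/
lemma heavies_pos_le (a b : ℝ) :
    heaviesAt cc (Ico a b) ≤ ENNReal.ofReal (max b 0) * 2⁻¹ ^ 12 := by
  rw [heaviesAt_apply cc measurableSet_Ico]
  have hk : ∀ k : ℕ, clusterAt (cc k) (nn k) (Ico a b)
      ≤ ENNReal.ofReal (max b 0) * 2⁻¹ ^ (13 + k) := by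
    intro k
    by_cases h0 : clusterAt (cc k) (nn k) (Ico a b) = 0
    · rw [h0]; exact zero_le
    · obtain ⟨i, hin, hmem⟩ := clusterAt_pos _ _ measurableSet_Ico h0
      have h2i : (0:ℝ) < 2 ^ i := by positivity
      have hcb : cc k ≤ max b 0 := by
        have := hmem.2
        have h3 : cc k < b := by linarith
        exact le_max_of_le_left h3.le
      calc clusterAt (cc k) (nn k) (Ico a b) ≤ 2 * 4 ^ (nn k) :=
            clusterAt_total _ _ measurableSet_Ico
      _ ≤ ENNReal.ofReal (cc k) * 2⁻¹ ^ (13 + k) := mass_le k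
      _ ≤ ENNReal.ofReal (max b 0) * 2⁻¹ ^ (13 + k) :=
            mul_le_mul_left (ENNReal.ofReal_le_ofReal hcb) _
  calc _ ≤ ∑' k : ℕ, ENNReal.ofReal (max b 0) * 2⁻¹ ^ (13 + k) := ENNReal.tsum_le_tsum hk
  _ = ENNReal.ofReal (max b 0) * 2⁻¹ ^ 12 := tsum_halfpow_shift _ 12

/-- Negative-side heavy measure grows at most linearly in the left endpoint. -/
lemma heavies_neg_le (a b : ℝ) :
    heaviesAt (fun k => -cc k) (Ico a b) ≤ ENNReal.ofReal (max (-a) 0) * 2⁻¹ ^ 11 := by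
  rw [heaviesAt_apply _ measurableSet_Ico]
  have hk : ∀ k : ℕ, clusterAt (-cc k) (nn k) (Ico a b)
      ≤ ENNReal.ofReal (max (-a) 0) * (2 * 2⁻¹ ^ (13 + k)) := by
    intro k
    by_cases h0 : clusterAt (-cc k) (nn k) (Ico a b) = 0
    · rw [h0]; exact zero_le
    · obtain ⟨i, hin, hmem⟩ := clusterAt_pos _ _ measurableSet_Ico h0
      have h2i : (2:ℝ) ^ i ≤ cc k / 2 := by
        have h1 : (2:ℝ) ^ i ≤ 2 ^ (nn k) := pow_le_pow_right₀ one_le_two hin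
        have h2 := nn_small k
        linarith
      have hca : cc k ≤ 2 * max (-a) 0 := by
        have h3 := hmem.1
        have h4 : a ≤ -cc k / 2 := by linarith
        have h5 : cc k / 2 ≤ -a := by linarith
        have h6 : -a ≤ max (-a) 0 := le_max_left _ _
        linarith
      calc clusterAt (-cc k) (nn k) (Ico a b) ≤ 2 * 4 ^ (nn k) :=
            clusterAt_total _ _ measurableSet_Ico
      _ ≤ ENNReal.ofReal (cc k) * 2⁻¹ ^ (13 + k) := mass_le k
      _ ≤ ENNReal.ofReal (2 * max (-a) 0) * 2⁻¹ ^ (13 + k) :=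
            mul_le_mul_left (ENNReal.ofReal_le_ofReal hca) _
      _ = ENNReal.ofReal (max (-a) 0) * (2 * 2⁻¹ ^ (13 + k)) := by
            rw [ENNReal.ofReal_mul (by norm_num), ENNReal.ofReal_ofNat]
            ring
  calc _ ≤ ∑' k : ℕ, ENNReal.ofReal (max (-a) 0) * (2 * 2⁻¹ ^ (13 + k)) :=
        ENNReal.tsum_le_tsum hk
  _ = ∑' k : ℕ, (ENNReal.ofReal (max (-a) 0) * 2) * 2⁻¹ ^ (13 + k) := by
        congr 1; funext k; ring
  _ = (ENNReal.ofReal (max (-a) 0) * 2) * 2⁻¹ ^ 12 := tsum_halfpow_shift _ 12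
  _ = ENNReal.ofReal (max (-a) 0) * (2 * 2⁻¹ ^ 12) := by ring
  _ = ENNReal.ofReal (max (-a) 0) * 2⁻¹ ^ 11 := by
        congr 1
        have : (12:ℕ) = 11 + 1 := rfl
        rw [this, pow_succ, mul_comm (2:ℝ≥0∞), mul_assoc,
          ENNReal.inv_mul_cancel two_ne_zero ofNat_ne_top, mul_one]

/-- Positive-side probes: linear growth bound. -/
lemma probes_pos_le (a b : ℝ) :
    probesAt cc (Ico a b) ≤ ENNReal.ofReal (max b 0) * 2⁻¹ ^ 15 := by
  rw [probesAt_apply cc measurableSet_Ico]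
  have hone : ∀ k : ℕ, (1:ℝ≥0∞) ≤ ENNReal.ofReal (cc k) * 2⁻¹ ^ 16 := by
    intro k
    have h1 : (2:ℝ≥0∞) ^ (16:ℕ) * 2⁻¹ ^ (16:ℕ) = 1 := by
      rw [← mul_pow, ENNReal.mul_inv_cancel two_ne_zero ofNat_ne_top, one_pow]
    have h2 : (2:ℝ≥0∞) ^ (16:ℕ) ≤ ENNReal.ofReal (cc k) := by
      have := cc_ge k
      calc (2:ℝ≥0∞) ^ (16:ℕ) = ENNReal.ofReal ((2:ℝ) ^ (16:ℕ)) := by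
            rw [← ENNReal.ofReal_ofNat 2, ← ENNReal.ofReal_pow (by norm_num)]
      _ ≤ _ := ENNReal.ofReal_le_ofReal (by norm_num at this ⊢; linarith)
    calc (1:ℝ≥0∞) = 2 ^ (16:ℕ) * 2⁻¹ ^ (16:ℕ) := h1.symm
    _ ≤ _ := mul_le_mul_left h2 _
  refine le_trans (ENNReal.tsum_le_tsum
      (g := fun k => ENNReal.ofReal (max b 0) * 2⁻¹ ^ (16 + k)) (fun k => ?_))
      (le_of_eq (tsum_halfpow_shift _ 15))
  · split_ifs with hmem
    · have hcb : cc k ≤ max b 0 := le_max_of_le_left hmem.2.le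
      calc (2⁻¹:ℝ≥0∞) ^ k = 1 * 2⁻¹ ^ k := (one_mul _).symm
      _ ≤ (ENNReal.ofReal (cc k) * 2⁻¹ ^ 16) * 2⁻¹ ^ k :=
            mul_le_mul_left (hone k) _
      _ = ENNReal.ofReal (cc k) * 2⁻¹ ^ (16 + k) := by rw [pow_add, mul_assoc]
      _ ≤ _ := mul_le_mul_left (ENNReal.ofReal_le_ofReal hcb) _
    · exact zero_le

/-- Negative-side probes: linear growth bound. -/
lemma probes_neg_le (a b : ℝ) :
    probesAt (fun k => -cc k) (Ico a b) ≤ ENNReal.ofReal (max (-a) 0) * 2⁻¹ ^ 15 := by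
  rw [probesAt_apply _ measurableSet_Ico]
  have hone : ∀ k : ℕ, (1:ℝ≥0∞) ≤ ENNReal.ofReal (cc k) * 2⁻¹ ^ 16 := by
    intro k
    have h1 : (2:ℝ≥0∞) ^ (16:ℕ) * 2⁻¹ ^ (16:ℕ) = 1 := by
      rw [← mul_pow, ENNReal.mul_inv_cancel two_ne_zero ofNat_ne_top, one_pow]
    have h2 : (2:ℝ≥0∞) ^ (16:ℕ) ≤ ENNReal.ofReal (cc k) := by
      have := cc_ge k
      calc (2:ℝ≥0∞) ^ (16:ℕ) = ENNReal.ofReal ((2:ℝ) ^ (16:ℕ)) := by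
            rw [← ENNReal.ofReal_ofNat 2, ← ENNReal.ofReal_pow (by norm_num)]
      _ ≤ _ := ENNReal.ofReal_le_ofReal (by norm_num at this ⊢; linarith)
    calc (1:ℝ≥0∞) = 2 ^ (16:ℕ) * 2⁻¹ ^ (16:ℕ) := h1.symm
    _ ≤ _ := mul_le_mul_left h2 _
  refine le_trans (ENNReal.tsum_le_tsum
      (g := fun k => ENNReal.ofReal (max (-a) 0) * 2⁻¹ ^ (16 + k)) (fun k => ?_))
      (le_of_eq (tsum_halfpow_shift _ 15))
  · split_ifs with hmem
    · have hcb : cc k ≤ max (-a) 0 := by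
        have h3 := hmem.1
        have h4 : cc k ≤ -a := by linarith
        exact le_max_of_le_left h4
      calc (2⁻¹:ℝ≥0∞) ^ k = 1 * 2⁻¹ ^ k := (one_mul _).symm
      _ ≤ (ENNReal.ofReal (cc k) * 2⁻¹ ^ 16) * 2⁻¹ ^ k :=
            mul_le_mul_left (hone k) _
      _ = ENNReal.ofReal (cc k) * 2⁻¹ ^ (16 + k) := by rw [pow_add, mul_assoc]
      _ ≤ _ := mul_le_mul_left (ENNReal.ofReal_le_ofReal hcb) _
    · exact zero_le

/-! ### Same-side bounds: heavy mass is controlled when a probe lies in the interval -/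

/-- helper : `4 * 2⁻¹^(m+2) = 2⁻¹^m` in `ℝ≥0∞`. -/
lemma four_mul_inv_pow (m : ℕ) : (4:ℝ≥0∞) * 2⁻¹ ^ (m + 2) = 2⁻¹ ^ m := by
  have h1 : (2:ℝ≥0∞) * 2⁻¹ = 1 := ENNReal.mul_inv_cancel two_ne_zero ofNat_ne_top
  have h4 : (4:ℝ≥0∞) = 2 * 2 := by norm_num
  rw [h4, pow_add, pow_two]
  calc (2:ℝ≥0∞) * 2 * (2⁻¹ ^ m * (2⁻¹ * 2⁻¹))
      = 2⁻¹ ^ m * ((2 * 2⁻¹) * (2 * 2⁻¹)) := by ring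
  _ = 2⁻¹ ^ m := by rw [h1, one_mul, mul_one]

lemma cluster_small_bound {j : ℕ} {L : ℝ} (hL : cc j ≤ 4 * L) (hL1 : 1 ≤ L) {s : Set ℝ}
    (hs : MeasurableSet s) (x : ℝ) :
    clusterAt x (nn j) s ≤ ENNReal.ofReal (L ^ 2) * 2⁻¹ ^ (11 + j) := by
  calc clusterAt x (nn j) s ≤ 2 * 4 ^ (nn j) := clusterAt_total _ _ hs
  _ ≤ ENNReal.ofReal (cc j) * 2⁻¹ ^ (13 + j) := mass_le j
  _ ≤ ENNReal.ofReal (4 * L ^ 2) * 2⁻¹ ^ (13 + j) := by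
      apply mul_le_mul_left
      apply ENNReal.ofReal_le_ofReal
      nlinarith
  _ = ENNReal.ofReal (L ^ 2) * 2⁻¹ ^ (11 + j) := by
      rw [ENNReal.ofReal_mul (by norm_num), ENNReal.ofReal_ofNat,
        show (13 + j) = (11 + j) + 2 by omega, mul_comm (4:ℝ≥0∞), mul_assoc,
        four_mul_inv_pow]

/-- If a negative-side probe `-cc K` lies in `[a,b)`, the negative-side heavy mass of `[a,b)`
is at most `3 (b-a)²`. -/
lemma heavies_neg_of_probe {a b : ℝ} (K : ℕ) (hK : -cc K ∈ Ico a b) :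
    heaviesAt (fun k => -cc k) (Ico a b) ≤ 3 * ENNReal.ofReal ((b - a) ^ 2) := by
  have hKa : a ≤ -cc K := hK.1
  have hKb : -cc K < b := hK.2
  rw [heaviesAt_apply _ measurableSet_Ico]
  have hjb : ∀ j : ℕ, clusterAt (-cc j) (nn j) (Ico a b)
      ≤ (if j = K then 2 * ENNReal.ofReal ((b-a)^2) else 0)
        + ENNReal.ofReal ((b-a)^2) * 2⁻¹ ^ (11 + j) := by
    intro j
    by_cases hjK : j = K
    · subst hjK
      rw [if_pos rfl]
      exact le_add_of_le_of_nonneg (clusterAt_near _ hKa) (zero_le)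
    · rw [if_neg hjK, zero_add]
      by_cases h0 : clusterAt (-cc j) (nn j) (Ico a b) = 0
      · rw [h0]; exact zero_le
      obtain ⟨i, hin, hmem⟩ := clusterAt_pos _ _ measurableSet_Ico h0
      have hq1 : a ≤ -cc j + 2 ^ i := hmem.1
      have hq2 : -cc j + 2 ^ i < b := hmem.2
      have h2i : (2:ℝ) ^ i ≤ cc j / 2 := by
        have h1 : (2:ℝ) ^ i ≤ 2 ^ (nn j) := pow_le_pow_right₀ one_le_two hin
        have h2 := nn_small j
        linarith
      have h2ipos : (0:ℝ) < 2 ^ i := by positivity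
      have hccjL : cc j ≤ 4 * (b - a) := by
        rcases lt_or_gt_of_ne hjK with hj | hj
        · have h4 := cc_quad hj
          have := cc_pos j
          linarith
        · have h4 := cc_quad hj
          have := cc_pos K
          linarith
      have hL1 : (1:ℝ) ≤ b - a := by
        have := cc_ge j
        linarith
      exact cluster_small_bound hccjL hL1 measurableSet_Ico _
  calc _ ≤ ∑' j : ℕ, ((if j = K then 2 * ENNReal.ofReal ((b-a)^2) else 0)
        + ENNReal.ofReal ((b-a)^2) * 2⁻¹ ^ (11 + j)) := ENNReal.tsum_le_tsum hjb
  _ = (∑' j : ℕ, (if j = K then 2 * ENNReal.ofReal ((b-a)^2) else 0))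
        + ∑' j : ℕ, ENNReal.ofReal ((b-a)^2) * 2⁻¹ ^ (11 + j) := ENNReal.tsum_add
  _ = 2 * ENNReal.ofReal ((b-a)^2) + ENNReal.ofReal ((b-a)^2) * 2⁻¹ ^ 10 := by
        rw [tsum_ite_eq, tsum_halfpow_shift _ 10]
  _ ≤ 2 * ENNReal.ofReal ((b-a)^2) + ENNReal.ofReal ((b-a)^2) * 1 := by
        exact add_le_add_right (mul_le_mul_right (two_inv_pow_le_one 10) _) _
  _ = 3 * ENNReal.ofReal ((b-a)^2) := by ring

/-- If a positive-side probe `cc K` lies in `[a,b)`, the positive-side heavy mass of `[a,b)`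
is at most `3 (b-a)²`. -/
lemma heavies_pos_of_probe {a b : ℝ} (K : ℕ) (hK : cc K ∈ Ico a b) :
    heaviesAt cc (Ico a b) ≤ 3 * ENNReal.ofReal ((b - a) ^ 2) := by
  have hKa : a ≤ cc K := hK.1
  have hKb : cc K < b := hK.2
  rw [heaviesAt_apply _ measurableSet_Ico]
  have hjb : ∀ j : ℕ, clusterAt (cc j) (nn j) (Ico a b)
      ≤ (if j = K then 2 * ENNReal.ofReal ((b-a)^2) else 0)
        + ENNReal.ofReal ((b-a)^2) * 2⁻¹ ^ (11 + j) := by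
    intro j
    by_cases hjK : j = K
    · subst hjK
      rw [if_pos rfl]
      exact le_add_of_le_of_nonneg (clusterAt_near _ hKa) (zero_le)
    · rw [if_neg hjK, zero_add]
      by_cases h0 : clusterAt (cc j) (nn j) (Ico a b) = 0
      · rw [h0]; exact zero_le
      obtain ⟨i, hin, hmem⟩ := clusterAt_pos _ _ measurableSet_Ico h0
      have hq1 : a ≤ cc j + 2 ^ i := hmem.1
      have hq2 : cc j + 2 ^ i < b := hmem.2
      have h2i : (2:ℝ) ^ i ≤ cc j / 2 := by
        have h1 : (2:ℝ) ^ i ≤ 2 ^ (nn j) := pow_le_pow_right₀ one_le_two hin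
        have h2 := nn_small j
        linarith
      have h2ipos : (0:ℝ) < 2 ^ i := by positivity
      have hccjL : cc j ≤ 4 * (b - a) := by
        rcases lt_or_gt_of_ne hjK with hj | hj
        · have h4 := cc_quad hj
          have := cc_pos j
          linarith
        · have h4 := cc_quad hj
          have := cc_pos K
          linarith
      have hL1 : (1:ℝ) ≤ b - a := by
        have := cc_ge j
        linarith
      exact cluster_small_bound hccjL hL1 measurableSet_Ico _
  calc _ ≤ ∑' j : ℕ, ((if j = K then 2 * ENNReal.ofReal ((b-a)^2) else 0)
        + ENNReal.ofReal ((b-a)^2) * 2⁻¹ ^ (11 + j)) := ENNReal.tsum_le_tsum hjb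
  _ = (∑' j : ℕ, (if j = K then 2 * ENNReal.ofReal ((b-a)^2) else 0))
        + ∑' j : ℕ, ENNReal.ofReal ((b-a)^2) * 2⁻¹ ^ (11 + j) := ENNReal.tsum_add
  _ = 2 * ENNReal.ofReal ((b-a)^2) + ENNReal.ofReal ((b-a)^2) * 2⁻¹ ^ 10 := by
        rw [tsum_ite_eq, tsum_halfpow_shift _ 10]
  _ ≤ 2 * ENNReal.ofReal ((b-a)^2) + ENNReal.ofReal ((b-a)^2) * 1 := by
        exact add_le_add_right (mul_le_mul_right (two_inv_pow_le_one 10) _) _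
  _ = 3 * ENNReal.ofReal ((b-a)^2) := by ring

/-! ### The A2 bound -/

lemma max_mul_max_le (a b : ℝ) : max (-a) 0 * max b 0 ≤ (b - a) ^ 2 := by
  rcases le_total (-a) 0 with h | h
  · rw [max_eq_right h, zero_mul]
    positivity
  · rcases le_total b 0 with h2 | h2
    · rw [max_eq_right h2, mul_zero]
      positivity
    · rw [max_eq_left h, max_eq_left h2]
      nlinarith

lemma ofReal_mul_max_le (a b : ℝ) :
    ENNReal.ofReal (max (-a) 0) * ENNReal.ofReal (max b 0)
      ≤ ENNReal.ofReal ((b - a) ^ 2) := by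
  rw [← ENNReal.ofReal_mul (le_max_right _ _)]
  exact ENNReal.ofReal_le_ofReal (max_mul_max_le a b)

lemma prod_le {a b : ℝ} (hab : a < b) :
    ωM (Ico a b) * σM (Ico a b) ≤ 100 * ENNReal.ofReal ((b - a) ^ 2) := by
  set Q := ENNReal.ofReal ((b - a) ^ 2) with hQ
  have hωs : ωM (Ico a b) = probesAt (fun k => -cc k) (Ico a b) + heaviesAt cc (Ico a b) := by
    rw [ωM, Measure.add_apply]
  have hσs : σM (Ico a b) = probesAt cc (Ico a b) + heaviesAt (fun k => -cc k) (Ico a b) := by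
    rw [σM, Measure.add_apply]
  rw [hωs, hσs, add_mul, mul_add, mul_add]
  -- T1: probes * probes
  have T1 : probesAt (fun k => -cc k) (Ico a b) * probesAt cc (Ico a b) ≤ Q := by
    calc _ ≤ (ENNReal.ofReal (max (-a) 0) * 2⁻¹ ^ 15) * (ENNReal.ofReal (max b 0) * 2⁻¹ ^ 15) :=
          mul_le_mul' (probes_neg_le a b) (probes_pos_le a b)
    _ = (ENNReal.ofReal (max (-a) 0) * ENNReal.ofReal (max b 0)) * (2⁻¹ ^ 15 * 2⁻¹ ^ 15) := by
          ring
    _ ≤ (ENNReal.ofReal (max (-a) 0) * ENNReal.ofReal (max b 0)) * (1 * 1) := by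
          exact mul_le_mul_right (mul_le_mul' (two_inv_pow_le_one 15) (two_inv_pow_le_one 15)) _
    _ = ENNReal.ofReal (max (-a) 0) * ENNReal.ofReal (max b 0) := by rw [mul_one, mul_one]
    _ ≤ Q := ofReal_mul_max_le a b
  -- T2: probes(-) * heavies(-)
  have T2 : probesAt (fun k => -cc k) (Ico a b) * heaviesAt (fun k => -cc k) (Ico a b)
      ≤ 6 * Q := by
    by_cases h0 : probesAt (fun k => -cc k) (Ico a b) = 0
    · rw [h0, zero_mul]; exact zero_le
    · obtain ⟨K, hK⟩ := probesAt_pos _ measurableSet_Ico h0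
      calc _ ≤ 2 * (3 * Q) :=
            mul_le_mul' (probesAt_le_two _ measurableSet_Ico) (heavies_neg_of_probe K hK)
      _ = 6 * Q := by ring
  -- T3: heavies(+) * probes(+)
  have T3 : heaviesAt cc (Ico a b) * probesAt cc (Ico a b) ≤ 6 * Q := by
    by_cases h0 : probesAt cc (Ico a b) = 0
    · rw [h0, mul_zero]; exact zero_le
    · obtain ⟨K, hK⟩ := probesAt_pos _ measurableSet_Ico h0
      calc _ ≤ (3 * Q) * 2 :=
            mul_le_mul' (heavies_pos_of_probe K hK) (probesAt_le_two _ measurableSet_Ico)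
      _ = 6 * Q := by ring
  -- T4: heavies * heavies
  have T4 : heaviesAt cc (Ico a b) * heaviesAt (fun k => -cc k) (Ico a b) ≤ Q := by
    calc _ ≤ (ENNReal.ofReal (max b 0) * 2⁻¹ ^ 12) * (ENNReal.ofReal (max (-a) 0) * 2⁻¹ ^ 11) :=
          mul_le_mul' (heavies_pos_le a b) (heavies_neg_le a b)
    _ = (ENNReal.ofReal (max (-a) 0) * ENNReal.ofReal (max b 0)) * (2⁻¹ ^ 12 * 2⁻¹ ^ 11) := by
          ring
    _ ≤ (ENNReal.ofReal (max (-a) 0) * ENNReal.ofReal (max b 0)) * (1 * 1) := by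
          exact mul_le_mul_right (mul_le_mul' (two_inv_pow_le_one 12) (two_inv_pow_le_one 11)) _
    _ = ENNReal.ofReal (max (-a) 0) * ENNReal.ofReal (max b 0) := by rw [mul_one, mul_one]
    _ ≤ Q := ofReal_mul_max_le a b
  calc _ ≤ (Q + 6 * Q) + (6 * Q + Q) := by
        exact add_le_add (add_le_add T1 T2) (add_le_add T3 T4)
  _ = 14 * Q := by ring
  _ ≤ 100 * Q := mul_le_mul_left (by norm_num) _

/-! ### Local finiteness -/

lemma ωM_Ico_lt_top (a b : ℝ) : ωM (Ico a b) < ⊤ := by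
  have h : ωM (Ico a b) = probesAt (fun k => -cc k) (Ico a b) + heaviesAt cc (Ico a b) := by
    rw [ωM, Measure.add_apply]
  rw [h]
  apply lt_of_le_of_lt (add_le_add (probesAt_le_two _ measurableSet_Ico) (heavies_pos_le a b))
  apply ENNReal.add_lt_top.2
  constructor
  · norm_num
  · exact lt_of_le_of_lt (mul_le_mul_right (two_inv_pow_le_one 12) _)
      (by rw [mul_one]; exact ENNReal.ofReal_lt_top)

lemma σM_Ico_lt_top (a b : ℝ) : σM (Ico a b) < ⊤ := by
  have h : σM (Ico a b) = probesAt cc (Ico a b) + heaviesAt (fun k => -cc k) (Ico a b) := by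
    rw [σM, Measure.add_apply]
  rw [h]
  apply lt_of_le_of_lt (add_le_add (probesAt_le_two _ measurableSet_Ico) (heavies_neg_le a b))
  apply ENNReal.add_lt_top.2
  constructor
  · norm_num
  · exact lt_of_le_of_lt (mul_le_mul_right (two_inv_pow_le_one 11) _)
      (by rw [mul_one]; exact ENNReal.ofReal_lt_top)

instance ωM_locFin : IsLocallyFiniteMeasure ωM :=
  ⟨fun x => ⟨Ico (x - 1) (x + 1), Ico_mem_nhds (by linarith) (by linarith),
    ωM_Ico_lt_top _ _⟩⟩

instance σM_locFin : IsLocallyFiniteMeasure σM :=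
  ⟨fun x => ⟨Ico (x - 1) (x + 1), Ico_mem_nhds (by linarith) (by linarith),
    σM_Ico_lt_top _ _⟩⟩

/-! ### Tails: the Poisson integrals blow up -/

lemma poisson_integrand_measurable (I : RInterval) :
    Measurable fun x : ℝ => ENNReal.ofReal (I.len / (I.len + infDist x I.set) ^ 2) := by
  apply Measurable.ennreal_ofReal
  apply Measurable.div measurable_const
  exact ((measurable_const.add (continuous_infDist_pt I.set).measurable).pow_const 2)

lemma lintegral_clusterAt (x : ℝ) (n : ℕ) {f : ℝ → ℝ≥0∞} (hf : Measurable f) :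
    ∫⁻ y, f y ∂(clusterAt x n) = ∑' i : ℕ, if i ≤ n then (4:ℝ≥0∞) ^ i * f (x + 2 ^ i) else 0 := by
  rw [clusterAt, lintegral_sum_measure]
  congr 1; funext i
  by_cases h : i ≤ n
  · rw [if_pos h, if_pos h, lintegral_smul_measure, lintegral_dirac' _ hf, smul_eq_mul]
  · rw [if_neg h, if_neg h, lintegral_zero_measure]

/-- The key generic tail lemma. -/
lemma tail_top (μ ν : Measure ℝ) (p : ℕ → ℝ)
    (hμ : ∀ k, ((2:ℝ≥0∞)⁻¹ ^ k • Measure.dirac (p k)) ≤ μ)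
    (hν : ∀ k, clusterAt (p k) (nn k) ≤ ν) :
    (⨆ I : RInterval, (μ I.set / ENNReal.ofReal I.len) * poisson I ν) = ⊤ := by
  rw [iSup_eq_top]
  intro e he
  obtain ⟨m, hm⟩ := ENNReal.exists_nat_gt he.ne
  set k := m + 2 with hk
  refine ⟨⟨p k, 2⁻¹, by norm_num⟩, ?_⟩
  set I : RInterval := ⟨p k, 2⁻¹, by norm_num⟩ with hI
  have hlen : I.len = 1 := by rw [RInterval.len]; norm_num
  have hIset : I.set = Ico (p k - 2⁻¹) (p k + 2⁻¹) := rfl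
  have hcmem : p k ∈ I.set := by
    rw [hIset]
    constructor
    · norm_num
    · norm_num
  -- lower bound on μ I.set
  have hμset : (2:ℝ≥0∞)⁻¹ ^ k ≤ μ I.set := by
    have h1 := Measure.le_iff'.1 (hμ k) I.set
    rw [Measure.smul_apply, hIset, Measure.dirac_apply' _ measurableSet_Ico,
      Set.indicator_apply, if_pos (hIset ▸ hcmem), Pi.one_apply, smul_eq_mul, mul_one] at h1
    exact h1
  -- lower bound on poisson I ν
  have hf := poisson_integrand_measurable I
  have hpois : ((4:ℝ≥0∞) ^ k) * ENNReal.ofReal (4⁻¹) ≤ poisson I ν := by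
    have h1 : poisson I (clusterAt (p k) (nn k)) ≤ poisson I ν :=
      lintegral_mono' (hν k) le_rfl
    refine le_trans ?_ h1
    rw [poisson, lintegral_clusterAt _ _ hf]
    have h2 : ∀ i ∈ Finset.range (nn k + 1),
        ENNReal.ofReal (4⁻¹)
          ≤ (if i ≤ nn k then (4:ℝ≥0∞) ^ i
              * ENNReal.ofReal (I.len / (I.len + infDist (p k + 2 ^ i) I.set) ^ 2) else 0) := by
      intro i hi
      rw [Finset.mem_range] at hi
      rw [if_pos (by omega)]
      have hd0 : 0 ≤ infDist (p k + 2 ^ i) I.set := infDist_nonneg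
      have h2ipos : (0:ℝ) < 2 ^ i := by positivity
      have hdle : infDist (p k + 2 ^ i) I.set ≤ 2 ^ i := by
        refine le_trans (infDist_le_dist_of_mem hcmem) ?_
        rw [Real.dist_eq]
        rw [show p k + 2 ^ i - p k = 2 ^ i by ring, abs_of_pos h2ipos]
      have hfrac : (4:ℝ)⁻¹ * ((4:ℝ) ^ i)⁻¹ ≤ I.len / (I.len + infDist (p k + 2 ^ i) I.set) ^ 2 := by
        rw [hlen]
        have hle : (1 + infDist (p k + 2 ^ i) I.set) ^ 2 ≤ (2 * 2 ^ i) ^ 2 := by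
          apply pow_le_pow_left₀ (by linarith)
          have h1i : (1:ℝ) ≤ 2 ^ i := one_le_pow₀ one_le_two
          linarith
        have hpos : (0:ℝ) < (1 + infDist (p k + 2 ^ i) I.set) ^ 2 := by positivity
        have h4 : ((2:ℝ) * 2 ^ i) ^ 2 = 4 * 4 ^ i := by
          rw [mul_pow, ← pow_mul, mul_comm i 2, pow_mul]
          norm_num
        calc (4:ℝ)⁻¹ * ((4:ℝ) ^ i)⁻¹ = 1 / (4 * 4 ^ i) := by
              rw [one_div, mul_inv]
        _ = 1 / ((2 * 2 ^ i) ^ 2) := by rw [h4]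
        _ ≤ 1 / ((1 + infDist (p k + 2 ^ i) I.set) ^ 2) :=
              one_div_le_one_div_of_le hpos hle
        _ = 1 / (1 + infDist (p k + 2 ^ i) I.set) ^ 2 := by rfl
      have h3 : (4:ℝ≥0∞) ^ i * ENNReal.ofReal ((4:ℝ)⁻¹ * ((4:ℝ) ^ i)⁻¹)
          = ENNReal.ofReal (4⁻¹) := by
        have h5 : (4:ℝ≥0∞) ^ i = ENNReal.ofReal ((4:ℝ) ^ i) := by
          rw [← ENNReal.ofReal_ofNat 4, ← ENNReal.ofReal_pow (by norm_num)]
        rw [h5, ← ENNReal.ofReal_mul (by positivity)]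
        congr 1
        have h6 : ((4:ℝ) ^ i) ≠ 0 := by positivity
        field_simp
      calc ENNReal.ofReal (4⁻¹)
          = (4:ℝ≥0∞) ^ i * ENNReal.ofReal ((4:ℝ)⁻¹ * ((4:ℝ) ^ i)⁻¹) := h3.symm
      _ ≤ _ := mul_le_mul_right (ENNReal.ofReal_le_ofReal hfrac) _
    calc ((4:ℝ≥0∞) ^ k) * ENNReal.ofReal (4⁻¹)
        ≤ ((nn k + 1 : ℕ) : ℝ≥0∞) * ENNReal.ofReal (4⁻¹) := by
          apply mul_le_mul_left
          rw [show ((4:ℝ≥0∞) ^ k) = (((4 ^ k : ℕ) : ℝ≥0∞)) by push_cast; ring]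
          exact Nat.cast_le.2 (by unfold nn; omega)
    _ = ∑ _i ∈ Finset.range (nn k + 1), ENNReal.ofReal (4⁻¹) := by
          rw [Finset.sum_const, Finset.card_range, nsmul_eq_mul]
    _ ≤ ∑ i ∈ Finset.range (nn k + 1),
          (if i ≤ nn k then (4:ℝ≥0∞) ^ i
            * ENNReal.ofReal (I.len / (I.len + infDist (p k + 2 ^ i) I.set) ^ 2) else 0) :=
          Finset.sum_le_sum h2
    _ ≤ _ := ENNReal.sum_le_tsum _
  -- combine
  have c2 : (2⁻¹:ℝ≥0∞) ^ k * 4 ^ k = 2 ^ k := by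
    rw [← mul_pow]
    congr 1
    rw [show (4:ℝ≥0∞) = 2 * 2 by norm_num, ← mul_assoc,
      ENNReal.inv_mul_cancel two_ne_zero ofNat_ne_top, one_mul]
  have hterm : (2:ℝ≥0∞) ^ m ≤ (μ I.set / ENNReal.ofReal I.len) * poisson I ν := by
    have hdiv : μ I.set / ENNReal.ofReal I.len = μ I.set := by
      rw [hlen, ENNReal.ofReal_one, div_one]
    rw [hdiv]
    calc (2:ℝ≥0∞) ^ m
        = (2⁻¹ ^ k) * (((4:ℝ≥0∞) ^ k) * ENNReal.ofReal (4⁻¹)) := by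
          rw [ENNReal.ofReal_inv_of_pos (by norm_num), ENNReal.ofReal_ofNat,
            ← mul_assoc, c2, hk, pow_add,
            show ((2:ℝ≥0∞) ^ 2) = 4 by norm_num, mul_assoc,
            ENNReal.mul_inv_cancel (by norm_num) (by norm_num), mul_one]
    _ ≤ _ := mul_le_mul' hμset hpois
  calc e < (m : ℝ≥0∞) := hm
  _ ≤ 2 ^ m := by
      rw [show ((2:ℝ≥0∞) ^ m) = (((2 ^ m : ℕ) : ℝ≥0∞)) by push_cast; ring]
      exact Nat.cast_le.2 (Nat.lt_two_pow_self (n := m)).le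
  _ ≤ _ := hterm

/-! ### Instantiating the tails -/

lemma tail_ω : (⨆ I : RInterval, (ωM I.set / ENNReal.ofReal I.len) * poisson I σM) = ⊤ := by
  apply tail_top ωM σM (fun k => -cc k)
  · intro k
    calc ((2:ℝ≥0∞)⁻¹ ^ k • Measure.dirac (-cc k))
        ≤ probesAt (fun k => -cc k) := Measure.le_sum _ k
    _ ≤ ωM := by
        rw [ωM]
        exact Measure.le_iff'.2 fun s => by
          rw [Measure.add_apply]; exact le_self_add
  · intro k
    calc clusterAt (-cc k) (nn k) ≤ heaviesAt (fun k => -cc k) := Measure.le_sum _ k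
    _ ≤ σM := by
        rw [σM]
        exact Measure.le_iff'.2 fun s => by
          rw [Measure.add_apply]; exact le_add_self

lemma tail_σ : (⨆ I : RInterval, (σM I.set / ENNReal.ofReal I.len) * poisson I ωM) = ⊤ := by
  apply tail_top σM ωM cc
  · intro k
    calc ((2:ℝ≥0∞)⁻¹ ^ k • Measure.dirac (cc k))
        ≤ probesAt cc := Measure.le_sum _ k
    _ ≤ σM := by
        rw [σM]
        exact Measure.le_iff'.2 fun s => by
          rw [Measure.add_apply]; exact le_self_add
  · intro k
    calc clusterAt (cc k) (nn k) ≤ heaviesAt cc := Measure.le_sum _ k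
    _ ≤ ωM := by
        rw [ωM]
        exact Measure.le_iff'.2 fun s => by
          rw [Measure.add_apply]; exact le_add_self

/-! ### The A2 supremum -/

lemma A2_lt_top :
    (⨆ I : RInterval, ωM I.set * σM I.set / ENNReal.ofReal (I.len ^ 2)) < ⊤ := by
  have hsup : ∀ I : RInterval, ωM I.set * σM I.set / ENNReal.ofReal (I.len ^ 2) ≤ 100 := by
    intro I
    have hr := I.hr
    have hab : I.c - I.r < I.c + I.r := by linarith
    have hlen : (I.c + I.r) - (I.c - I.r) = I.len := by rw [RInterval.len]; ring
    have hIset : I.set = Ico (I.c - I.r) (I.c + I.r) := rfl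
    have h2 := prod_le hab
    rw [hlen] at h2
    have hlen_pos : (0:ℝ) < I.len := by rw [RInterval.len]; linarith
    rw [ENNReal.div_le_iff_le_mul]
    · rw [hIset]
      exact h2
    · left
      simp only [Ne, ENNReal.ofReal_eq_zero, not_le]
      positivity
    · left
      exact ENNReal.ofReal_ne_top
  exact lt_of_le_of_lt (iSup_le hsup) (by norm_num)

end Stmt6

/-- There exist locally finite positive Borel measures on `ℝ` satisfying the
classical two-weight `A_2` condition but failing both one-tailed `A_2` conditions. -/
theorem stmt_6 :
    ∃ ω σ : Measure ℝ, IsLocallyFiniteMeasure ω ∧ IsLocallyFiniteMeasure σ ∧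
      (⨆ I : RInterval, ω I.set * σ I.set / ENNReal.ofReal (I.len ^ 2)) < ⊤ ∧
      (⨆ I : RInterval, (ω I.set / ENNReal.ofReal I.len) * poisson I σ) = ⊤ ∧
      (⨆ I : RInterval, (σ I.set / ENNReal.ofReal I.len) * poisson I ω) = ⊤ := by
  exact ⟨Stmt6.ωM, Stmt6.σM, Stmt6.ωM_locFin, Stmt6.σM_locFin, Stmt6.A2_lt_top,
    Stmt6.tail_ω, Stmt6.tail_σ⟩
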